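/- For every δ > 0, lim_{n→∞} ∫_{|z| ≤ n} ∫_{|w| ≥ n} |w|^{−2} e^{−δ|z−w|} dλ(w) dλ(z) = 0, where the limit is over integers n ≥ 1. -/

import Mathlib

open MeasureTheory Filter Real Set Metric ENNReal NNReal

/-- Finiteness of the lintegral of `exp (-b * |u|)` over `ℂ`. -/
lemma stmt9_aux_fin {b : ℝ} (hb : 0 < b) :
    ∫⁻ u : ℂ, ENNReal.ofReal (Real.exp (-b * ‖u‖)) < ⊤ := by
  have hint : Integrable (fun u : ℂ => Real.exp (-b * ‖u‖)) := by
    have h1 : Integrable (fun u : ℂ => (6 * Real.exp b / b ^ 3) * (1 + ‖u‖) ^ (-(3:ℝ))) := by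
      exact (integrable_one_add_norm
        (by simp [Complex.finrank_real_complex]; norm_num)).const_mul _
    refine h1.mono' ?_ ?_
    · exact (Real.continuous_exp.comp (by continuity)).aestronglyMeasurable
    · refine Filter.Eventually.of_forall fun u => ?_
      rw [Real.norm_eq_abs, abs_of_nonneg (Real.exp_pos _).le]
      set r : ℝ := ‖u‖ with hrdef
      have hr : (0:ℝ) ≤ r := norm_nonneg u
      have hpos : (0:ℝ) < 1 + r := by positivity
      have hx : (0:ℝ) ≤ b * (1 + r) := by positivity
      have h3 := Real.pow_div_factorial_le_exp (b * (1 + r)) hx 3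
      norm_num [Nat.factorial] at h3
      rw [mul_one_add, Real.exp_add] at h3
      have h4 : Real.exp (-b * r) * Real.exp (b * r) = 1 := by
        rw [← Real.exp_add]; ring_nf; exact Real.exp_zero
      have target : Real.exp (-b * r) * (b ^ 3 * (1 + r) ^ 3) ≤ 6 * Real.exp b := by
        have h5 := mul_le_mul_of_nonneg_left h3 (Real.exp_pos (-b * r)).le
        have h6 : Real.exp (-b * r) * (Real.exp b * Real.exp (b * r)) = Real.exp b := by
          rw [mul_comm (Real.exp b), ← mul_assoc, h4, one_mul]
        rw [h6] at h5
        nlinarith [h5]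
      rw [Real.rpow_neg hpos.le, show ((3:ℝ)) = ((3:ℕ):ℝ) by norm_num, Real.rpow_natCast]
      have hb3 : (0:ℝ) < b ^ 3 * (1 + r) ^ 3 := by positivity
      calc Real.exp (-b * r)
          = Real.exp (-b * r) * (b ^ 3 * (1 + r) ^ 3) / (b ^ 3 * (1 + r) ^ 3) := by
            field_simp
        _ ≤ 6 * Real.exp b / (b ^ 3 * (1 + r) ^ 3) := by gcongr
        _ = 6 * Real.exp b / b ^ 3 * ((1 + r) ^ 3)⁻¹ := by
            rw [div_mul_eq_div_div, div_eq_mul_inv]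
  exact hint.lintegral_lt_top

/-- For every `δ > 0`,
`lim_{n→∞} ∫_{|z|≤n} ∫_{|w|≥n} |w|⁻² e^(−δ|z−w|) dλ(w) dλ(z) = 0`. -/
theorem stmt9 (δ : ℝ) (hδ : 0 < δ) :
    Tendsto (fun n : ℕ =>
        ∫⁻ z in {z : ℂ | ‖z‖ ≤ n},
          ∫⁻ w in {w : ℂ | (n : ℝ) ≤ ‖w‖},
            ENNReal.ofReal
              ((‖w‖) ⁻¹ ^ 2 * Real.exp (-δ * ‖z - w‖)))
      atTop (nhds 0) := by
  have hεpos : 0 < δ / 2 := by positivity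
  set ε := δ / 2 with hε
  set C : ℝ≥0∞ := ∫⁻ u : ℂ, ENNReal.ofReal (Real.exp (-ε * ‖u‖)) with hC
  have hCfin : C ≠ ⊤ := (stmt9_aux_fin hεpos).ne
  -- key bound
  have key : ∀ n : ℕ, 1 ≤ n →
      (∫⁻ z in {z : ℂ | ‖z‖ ≤ n},
        ∫⁻ w in {w : ℂ | (n : ℝ) ≤ ‖w‖},
          ENNReal.ofReal
            ((‖w‖) ⁻¹ ^ 2 * Real.exp (-δ * ‖z - w‖)))
      ≤ C * ENNReal.ofReal
          (Real.pi * (Real.exp (-ε * Real.sqrt n) + 2 / Real.sqrt n)) := by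
    intro n hn
    set N : ℝ := (n : ℝ) with hNdef
    have hN : 1 ≤ N := by rw [hNdef]; exact_mod_cast hn
    have hN0 : 0 < N := by linarith
    set s : ℝ := Real.sqrt N with hsdef
    have hs1 : 1 ≤ s := by
      rw [hsdef, show (1:ℝ) = Real.sqrt 1 by simp]
      exact Real.sqrt_le_sqrt hN
    have hs0 : 0 < s := by linarith
    have hss : s * s = N := Real.mul_self_sqrt hN0.le
    have hsN : s ≤ N := by nlinarith
    -- inner bound
    have inner_bound : ∀ z : ℂ, ‖z‖ ≤ N →
        (∫⁻ w in {w : ℂ | N ≤ ‖w‖},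
          ENNReal.ofReal
            ((‖w‖)⁻¹ ^ 2 * Real.exp (-δ * ‖z - w‖)))
        ≤ ENNReal.ofReal (N⁻¹ ^ 2 * Real.exp (-ε * (N - ‖z‖))) * C := by
      intro z hz
      have hmeas : MeasurableSet {w : ℂ | N ≤ ‖w‖} :=
        (isClosed_le continuous_const continuous_norm).measurableSet
      calc ∫⁻ w in {w : ℂ | N ≤ ‖w‖},
            ENNReal.ofReal
              ((‖w‖)⁻¹ ^ 2 * Real.exp (-δ * ‖z - w‖))
          ≤ ∫⁻ w in {w : ℂ | N ≤ ‖w‖},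
            ENNReal.ofReal (N⁻¹ ^ 2 * Real.exp (-ε * (N - ‖z‖)) *
              Real.exp (-ε * ‖z - w‖)) := by
            refine setLIntegral_mono' hmeas fun w hw => ?_
            refine ENNReal.ofReal_le_ofReal ?_
            have hw' : N ≤ ‖w‖ := hw
            have habs : N - ‖z‖ ≤ ‖z - w‖ := by
              have h1 : ‖w‖ - ‖z‖ ≤ ‖w - z‖ := by
                simpa using norm_sub_norm_le w z
              have h2 : ‖w - z‖ = ‖z - w‖ :=
                norm_sub_rev w z
              linarith
            have h1 : (‖w‖)⁻¹ ^ 2 ≤ N⁻¹ ^ 2 := by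
              have : (‖w‖)⁻¹ ≤ N⁻¹ := by
                apply inv_anti₀ hN0 hw'
              exact pow_le_pow_left₀ (by positivity) this 2
            have h2 : Real.exp (-δ * ‖z - w‖)
                = Real.exp (-ε * ‖z - w‖) *
                  Real.exp (-ε * ‖z - w‖) := by
              rw [← Real.exp_add]; congr 1; rw [hε]; ring
            have h3 : Real.exp (-ε * ‖z - w‖)
                ≤ Real.exp (-ε * (N - ‖z‖)) := by
              apply Real.exp_le_exp.mpr
              nlinarith
            calc (‖w‖)⁻¹ ^ 2 * Real.exp (-δ * ‖z - w‖)
                = (‖w‖)⁻¹ ^ 2 * (Real.exp (-ε * ‖z - w‖) *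
                    Real.exp (-ε * ‖z - w‖)) := by rw [h2]
              _ ≤ N⁻¹ ^ 2 * (Real.exp (-ε * (N - ‖z‖)) *
                    Real.exp (-ε * ‖z - w‖)) := by
                  apply mul_le_mul h1 _ (by positivity) (by positivity)
                  exact mul_le_mul_of_nonneg_right h3 (Real.exp_pos _).le
              _ = N⁻¹ ^ 2 * Real.exp (-ε * (N - ‖z‖)) *
                    Real.exp (-ε * ‖z - w‖) := by ring
        _ = ENNReal.ofReal (N⁻¹ ^ 2 * Real.exp (-ε * (N - ‖z‖))) *
            ∫⁻ w in {w : ℂ | N ≤ ‖w‖},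
              ENNReal.ofReal (Real.exp (-ε * ‖z - w‖)) := by
            simp_rw [ENNReal.ofReal_mul (show (0:ℝ) ≤ N⁻¹ ^ 2 * Real.exp (-ε * (N - ‖z‖)) by positivity)]
            rw [lintegral_const_mul' _ _ ENNReal.ofReal_ne_top]
        _ ≤ ENNReal.ofReal (N⁻¹ ^ 2 * Real.exp (-ε * (N - ‖z‖))) *
            ∫⁻ w : ℂ, ENNReal.ofReal (Real.exp (-ε * ‖z - w‖)) := by
            gcongr
            exact Measure.restrict_le_self
        _ = ENNReal.ofReal (N⁻¹ ^ 2 * Real.exp (-ε * (N - ‖z‖))) * C := by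
            congr 1
            have habs : ∀ w : ℂ, ‖z - w‖ = ‖w - z‖ :=
              fun w => norm_sub_rev z w
            simp_rw [habs]
            exact lintegral_sub_right_eq_self
              (fun w => ENNReal.ofReal (Real.exp (-ε * ‖w‖))) z
    -- outer estimate
    have hBmeas : MeasurableSet {z : ℂ | ‖z‖ ≤ N} :=
      (isClosed_le continuous_norm continuous_const).measurableSet
    have hAmeas : MeasurableSet {z : ℂ | ‖z‖ ≤ N - s} :=
      (isClosed_le continuous_norm continuous_const).measurableSet
    have hNne : N ≠ 0 := hN0.ne'
    have hofpi : ∀ r : ℝ, 0 ≤ r →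
        ENNReal.ofReal r ^ 2 * (NNReal.pi : ℝ≥0∞) = ENNReal.ofReal (r ^ 2 * Real.pi) := by
      intro r hr
      rw [ENNReal.ofReal_mul (by positivity), ENNReal.ofReal_pow hr]
      congr 1
      rw [← NNReal.coe_real_pi, ENNReal.ofReal_coe_nnreal]
    have hBall : {z : ℂ | ‖z‖ ≤ N} = Metric.closedBall (0:ℂ) N := by
      ext z; simp [Metric.mem_closedBall, Complex.dist_eq]
    have volB : volume {z : ℂ | ‖z‖ ≤ N} = ENNReal.ofReal (N ^ 2 * Real.pi) := by
      rw [hBall, Complex.volume_closedBall, hofpi N hN0.le]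
    have volD : volume ({z : ℂ | ‖z‖ ≤ N} ∩ {z : ℂ | N - s ≤ ‖z‖})
        ≤ ENNReal.ofReal (2 * N * s * Real.pi) := by
      have hsub : ({z : ℂ | ‖z‖ ≤ N} ∩ {z : ℂ | N - s ≤ ‖z‖})
          ⊆ Metric.closedBall (0:ℂ) N \ Metric.ball (0:ℂ) (N - s) := by
        rintro z ⟨h1, h2⟩
        refine ⟨by simpa [Metric.mem_closedBall, Complex.dist_eq] using h1, ?_⟩
        simp only [Metric.mem_ball, Complex.dist_eq, sub_zero, not_lt]
        exact h2
      refine (measure_mono hsub).trans ?_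
      rw [measure_diff (Metric.ball_subset_closedBall.trans
          (Metric.closedBall_subset_closedBall (by linarith)))
          measurableSet_ball.nullMeasurableSet
          (by rw [Complex.volume_ball, hofpi _ (by linarith)]; exact ENNReal.ofReal_ne_top)]
      rw [Complex.volume_closedBall, Complex.volume_ball, hofpi N hN0.le,
        hofpi _ (by linarith : (0:ℝ) ≤ N - s)]
      refine tsub_le_iff_right.mpr ?_
      rw [← ENNReal.ofReal_add (by positivity) (by positivity)]
      refine ENNReal.ofReal_le_ofReal ?_
      nlinarith [mul_nonneg Real.pi_pos.le (sq_nonneg s)]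
    calc ∫⁻ z in {z : ℂ | ‖z‖ ≤ N},
          ∫⁻ w in {w : ℂ | N ≤ ‖w‖},
            ENNReal.ofReal
              ((‖w‖)⁻¹ ^ 2 * Real.exp (-δ * ‖z - w‖))
        ≤ ∫⁻ z in {z : ℂ | ‖z‖ ≤ N},
            ENNReal.ofReal (N⁻¹ ^ 2 * Real.exp (-ε * (N - ‖z‖))) * C :=
          setLIntegral_mono' hBmeas inner_bound
      _ ≤ (∫⁻ z in {z : ℂ | ‖z‖ ≤ N - s},
            ENNReal.ofReal (N⁻¹ ^ 2 * Real.exp (-ε * (N - ‖z‖))) * C)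
          + ∫⁻ z in ({z : ℂ | ‖z‖ ≤ N} ∩ {z : ℂ | N - s ≤ ‖z‖}),
            ENNReal.ofReal (N⁻¹ ^ 2 * Real.exp (-ε * (N - ‖z‖))) * C := by
          refine le_trans (lintegral_mono_set ?_) (lintegral_union_le _ _ _)
          intro z hz
          rcases le_total (‖z‖) (N - s) with h | h
          · exact Or.inl h
          · exact Or.inr ⟨hz, h⟩
      _ ≤ ENNReal.ofReal (N⁻¹ ^ 2 * Real.exp (-ε * s)) * C * ENNReal.ofReal (N ^ 2 * Real.pi)
          + ENNReal.ofReal (N⁻¹ ^ 2) * C * ENNReal.ofReal (2 * N * s * Real.pi) := by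
          refine add_le_add ?_ ?_
          · calc ∫⁻ z in {z : ℂ | ‖z‖ ≤ N - s},
                  ENNReal.ofReal (N⁻¹ ^ 2 * Real.exp (-ε * (N - ‖z‖))) * C
                ≤ ∫⁻ _z in {z : ℂ | ‖z‖ ≤ N - s},
                  ENNReal.ofReal (N⁻¹ ^ 2 * Real.exp (-ε * s)) * C := by
                  refine setLIntegral_mono' hAmeas fun z hz => ?_
                  refine mul_le_mul_left (ENNReal.ofReal_le_ofReal ?_) C
                  have hz' : ‖z‖ ≤ N - s := hz
                  refine mul_le_mul_of_nonneg_left ?_ (by positivity)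
                  exact Real.exp_le_exp.mpr (by nlinarith)
              _ ≤ ENNReal.ofReal (N⁻¹ ^ 2 * Real.exp (-ε * s)) * C
                  * ENNReal.ofReal (N ^ 2 * Real.pi) := by
                  rw [setLIntegral_const, ← volB]
                  refine mul_le_mul_right (measure_mono fun z hz => ?_) _
                  have hz' : ‖z‖ ≤ N - s := hz
                  show ‖z‖ ≤ N
                  linarith
          · calc ∫⁻ z in ({z : ℂ | ‖z‖ ≤ N} ∩ {z : ℂ | N - s ≤ ‖z‖}),
                  ENNReal.ofReal (N⁻¹ ^ 2 * Real.exp (-ε * (N - ‖z‖))) * C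
                ≤ ∫⁻ _z in ({z : ℂ | ‖z‖ ≤ N} ∩ {z : ℂ | N - s ≤ ‖z‖}),
                  ENNReal.ofReal (N⁻¹ ^ 2) * C := by
                  refine setLIntegral_mono'
                    (hBmeas.inter
                      ((isClosed_le continuous_const continuous_norm).measurableSet))
                    fun z hz => ?_
                  refine mul_le_mul_left (ENNReal.ofReal_le_ofReal ?_) C
                  have hz1 : ‖z‖ ≤ N := hz.1
                  calc N⁻¹ ^ 2 * Real.exp (-ε * (N - ‖z‖))
                      ≤ N⁻¹ ^ 2 * 1 := by
                        refine mul_le_mul_of_nonneg_left ?_ (by positivity)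
                        exact Real.exp_le_one_iff.mpr (by nlinarith)
                    _ = N⁻¹ ^ 2 := mul_one _
              _ ≤ ENNReal.ofReal (N⁻¹ ^ 2) * C * ENNReal.ofReal (2 * N * s * Real.pi) := by
                  rw [setLIntegral_const]
                  exact mul_le_mul_right volD _
      _ = C * ENNReal.ofReal (Real.pi * (Real.exp (-ε * s) + 2 / s)) := by
          have e1 : ENNReal.ofReal (N⁻¹ ^ 2 * Real.exp (-ε * s)) * C
                * ENNReal.ofReal (N ^ 2 * Real.pi)
              = C * ENNReal.ofReal (Real.pi * Real.exp (-ε * s)) := by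
            rw [mul_comm _ C, mul_assoc, ← ENNReal.ofReal_mul (by positivity)]
            congr 2
            field_simp
          have e2 : ENNReal.ofReal (N⁻¹ ^ 2) * C * ENNReal.ofReal (2 * N * s * Real.pi)
              = C * ENNReal.ofReal (Real.pi * (2 / s)) := by
            rw [mul_comm _ C, mul_assoc, ← ENNReal.ofReal_mul (by positivity)]
            congr 2
            rw [show N = s * s from hss.symm]
            field_simp
          rw [e1, e2, ← mul_add, ← ENNReal.ofReal_add (by positivity) (by positivity),
            mul_add]
  have hsq : Tendsto (fun n : ℕ => Real.sqrt (n : ℝ)) atTop atTop := by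
    have h := (_root_.tendsto_rpow_atTop (by norm_num : (0:ℝ) < 1/2)).comp
      (tendsto_natCast_atTop_atTop (R := ℝ))
    refine h.congr fun n => ?_
    simp [Function.comp, Real.sqrt_eq_rpow]
  have hreal : Tendsto
      (fun n : ℕ => Real.pi * (Real.exp (-ε * Real.sqrt n) + 2 / Real.sqrt n))
      atTop (nhds 0) := by
    have h1 : Tendsto (fun n : ℕ => Real.exp (-ε * Real.sqrt n)) atTop (nhds 0) := by
      have h := Real.tendsto_exp_neg_atTop_nhds_zero.comp
        (Tendsto.const_mul_atTop hεpos hsq)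
      refine h.congr fun n => ?_
      simp [Function.comp, neg_mul]
    have h2 : Tendsto (fun n : ℕ => 2 / Real.sqrt n) atTop (nhds 0) :=
      hsq.const_div_atTop 2
    have h3 := (h1.add h2).const_mul Real.pi
    simpa using h3
  have hup : Tendsto (fun n : ℕ => C * ENNReal.ofReal
      (Real.pi * (Real.exp (-ε * Real.sqrt n) + 2 / Real.sqrt n))) atTop (nhds 0) := by
    have h := ENNReal.Tendsto.const_mul (ENNReal.tendsto_ofReal hreal) (Or.inr hCfin)
    simpa using h
  refine tendsto_of_tendsto_of_tendsto_of_le_of_le' tendsto_const_nhds hup ?_ ?_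
  · exact Eventually.of_forall fun n => zero_le
  · filter_upwards [eventually_ge_atTop 1] with n hn using key n hn
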